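/- (Generalized Alon-Friedland-Kalai Lemma, inequality part) Let R be a discrete valuation ring with maximal ideal p = (π) and finite residue field of cardinality q. Let v ≥ 1, let S(v) be a set of coset representatives for p^v in R, and let T ⊂ R be a nonempty finite set no two distinct elements of which are congruent modulo p; let T̄ be the image of T in S(v) (i.e., the set of representatives in S(v) of elements of T modulo p^v). For x ∈ R, define P(x,v,T) = Π_{y ∈ S(v) \ T̄} (x - y) and c(v) = Σ_{i=1}^{v-1} (q^i - 1). Then ord_p P(x,v,T) ≥ c(v). -/

import Mathlib

open IsLocalRing

section Aux
variable {R : Type*} [CommRing R] [IsDomain R] [IsDiscreteValuationRing R]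

lemma aux_pow_mem {π : R} (hπ : Irreducible π) {k m : ℕ} (h : k ≤ m) :
    π ^ m ∈ (maximalIdeal R) ^ k := by
  apply Ideal.pow_le_pow_right h
  rw [hπ.maximalIdeal_eq, Ideal.span_singleton_pow, Ideal.mem_span_singleton]

lemma aux_unit_mul {π : R} (hπ : Irreducible π) {c : R} (hc : c ∉ maximalIdeal R) (m : ℕ) :
    c * π ^ m ∉ (maximalIdeal R) ^ (m + 1) := by
  intro h
  rw [hπ.maximalIdeal_eq, Ideal.span_singleton_pow, Ideal.mem_span_singleton, pow_succ] at h
  have hπ0 : π ^ m ≠ 0 := pow_ne_zero m hπ.ne_zero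
  rw [mul_comm c (π ^ m)] at h
  have : π ∣ c := (mul_dvd_mul_iff_left hπ0).mp h
  exact hc (by rw [hπ.maximalIdeal_eq, Ideal.mem_span_singleton]; exact this)

lemma aux_prod_mem {ι : Type*} (I : Ideal R) (A : Finset ι) (f : ι → R) (e : ι → ℕ)
    (h : ∀ y ∈ A, f y ∈ I ^ e y) :
    (∏ y ∈ A, f y) ∈ I ^ (∑ y ∈ A, e y) := by
  classical
  induction A using Finset.cons_induction with
  | empty => simp
  | cons a s ha ih =>
      rw [Finset.prod_cons, Finset.sum_cons, pow_add]
      exact Ideal.mul_mem_mul (h a (Finset.mem_cons_self a s))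
        (ih fun y hy => h y (Finset.mem_cons_of_mem hy))

end Aux

theorem stmt6 (R : Type*) [CommRing R] [IsDomain R] [IsDiscreteValuationRing R]
    [DecidableEq R] [Fintype (ResidueField R)] (q : ℕ) (hq : q = Fintype.card (ResidueField R))
    (v : ℕ) (hv : 1 ≤ v)
    (S : Finset R)
    (hS : ∀ x : R, ∃! s : R, s ∈ S ∧ x - s ∈ (maximalIdeal R) ^ v)
    (T : Finset R) (hT : T.Nonempty)
    (hTF : ∀ x ∈ T, ∀ y ∈ T, x ≠ y → x - y ∉ maximalIdeal R)
    (Tbar : Finset R)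
    (hTbar : ∀ s : R, s ∈ Tbar ↔ s ∈ S ∧ ∃ t ∈ T, t - s ∈ (maximalIdeal R) ^ v)
    (x : R) :
    (∏ y ∈ S \ Tbar, (x - y)) ∈
      (maximalIdeal R) ^ (∑ i ∈ Finset.Ico 1 v, (q ^ i - 1)) := by
  classical
  obtain ⟨π, hπ⟩ := IsDiscreteValuationRing.exists_irreducible R
  set p : Ideal R := maximalIdeal R with hp
  set A : Finset R := S \ Tbar with hA
  -- exponent function
  set e : R → ℕ := fun y => ((Finset.Ico 1 v).filter (fun j => x - y ∈ p ^ j)).card with he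
  -- Claim 1: x - y ∈ p ^ e y
  have claim1 : ∀ y : R, x - y ∈ p ^ (e y) := by
    intro y
    by_cases hne : ((Finset.Ico 1 v).filter (fun j => x - y ∈ p ^ j)).Nonempty
    · set F := (Finset.Ico 1 v).filter (fun j => x - y ∈ p ^ j) with hF
      set m := F.max' hne with hm
      have hmF : m ∈ F := F.max'_mem hne
      have hmem : x - y ∈ p ^ m := (Finset.mem_filter.mp hmF).2
      have hsub : F ⊆ Finset.Icc 1 m := by
        intro j hj
        have h1 := Finset.mem_Ico.mp (Finset.mem_filter.mp hj).1
        exact Finset.mem_Icc.mpr ⟨h1.1, F.le_max' j hj⟩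
      have hcard : e y ≤ m := by
        have := Finset.card_le_card hsub
        simpa [Nat.card_Icc] using this
      exact Ideal.pow_le_pow_right hcard hmem
    · rw [Finset.not_nonempty_iff_eq_empty] at hne
      simp only [he, hne, Finset.card_empty, pow_zero, Ideal.one_eq_top]
      exact Submodule.mem_top
  -- Claim 2: product in p ^ sum
  have claim2 : (∏ y ∈ A, (x - y)) ∈ p ^ (∑ y ∈ A, e y) :=
    aux_prod_mem p A _ e (fun y _ => claim1 y)
  -- Claim 3: swap sums
  have claim3 : (∑ y ∈ A, e y)
      = ∑ j ∈ Finset.Ico 1 v, (A.filter (fun y => x - y ∈ p ^ j)).card := by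
    simp only [he, Finset.card_filter]
    exact Finset.sum_comm
  -- counting: S part
  -- representative and lift functions
  have hrep := fun z : R => (hS z).choose_spec
  set rep : R → R := fun z => (hS z).choose with hrepdef
  set lift : ResidueField R → R := Function.surjInv residue_surjective with hliftdef
  have hlift : ∀ a : ResidueField R, residue R (lift a) = a :=
    fun a => Function.surjInv_eq residue_surjective a
  have countS : ∀ j ∈ Finset.Ico 1 v,
      q ^ (v - j) ≤ (S.filter (fun y => x - y ∈ p ^ j)).card := by
    intro j hj
    rw [Finset.mem_Ico] at hj
    set n := v - j with hn
    set z : (Fin n → ResidueField R) → R :=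
      fun a => x + ∑ i : Fin n, lift (a i) * π ^ (j + (i : ℕ)) with hz
    set g : (Fin n → ResidueField R) → R := fun a => rep (z a) with hg
    have hzsum : ∀ a, z a - x ∈ p ^ j := by
      intro a
      have : z a - x = ∑ i : Fin n, lift (a i) * π ^ (j + (i : ℕ)) := by rw [hz]; ring
      rw [this]
      exact Ideal.sum_mem _ fun i _ =>
        Ideal.mul_mem_left _ _ (aux_pow_mem hπ (Nat.le_add_right j i))
    have hmaps : ∀ a, g a ∈ S.filter (fun y => x - y ∈ p ^ j) := by
      intro a
      rcases (hrep (z a)).1 with ⟨hmem, hdiff⟩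
      refine Finset.mem_filter.mpr ⟨hmem, ?_⟩
      have : x - g a = (z a - rep (z a)) - (z a - x) := by ring
      rw [this]
      exact Ideal.sub_mem _ (Ideal.pow_le_pow_right hj.2.le hdiff) (hzsum a)
    have hinj : Function.Injective g := by
      intro a b hab
      by_contra hne
      have hFne : (Finset.univ.filter (fun i : Fin n => a i ≠ b i)).Nonempty := by
        rw [Finset.filter_nonempty_iff]
        push_neg at hne
        obtain ⟨i, hi⟩ := Function.ne_iff.mp hne
        exact ⟨i, Finset.mem_univ i, hi⟩
      set i0 := (Finset.univ.filter (fun i : Fin n => a i ≠ b i)).min' hFne with hi0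
      have hi0mem := Finset.min'_mem _ hFne
      have hi0ne : a i0 ≠ b i0 := (Finset.mem_filter.mp hi0mem).2
      have hlt : ∀ i : Fin n, i < i0 → a i = b i := by
        intro i hi
        by_contra hcon
        exact absurd (Finset.min'_le _ i (Finset.mem_filter.mpr ⟨Finset.mem_univ i, hcon⟩))
          (not_le.mpr hi)
      set d : Fin n → R := fun i => lift (a i) - lift (b i) with hd
      have hdi0 : d i0 ∉ p := by
        intro hcon
        apply hi0ne
        have : residue R (d i0) = 0 := Ideal.Quotient.eq_zero_iff_mem.mpr hcon
        rw [hd] at this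
        simp only [map_sub, hlift] at this
        exact sub_eq_zero.mp this
      -- z a - z b ∈ p ^ v
      have hzz : z a - z b ∈ p ^ v := by
        have h1 := (hrep (z a)).1.2
        have h2 := (hrep (z b)).1.2
        have : z a - z b = (z a - rep (z a)) - (z b - rep (z b)) := by
          rw [show rep (z a) = g a from rfl, show rep (z b) = g b from rfl, hab]; ring
        rw [this]
        exact Ideal.sub_mem _ h1 h2
      have hdi : ∀ i, d i = lift (a i) - lift (b i) := fun i => rfl
      have hza : z a = x + ∑ i : Fin n, lift (a i) * π ^ (j + (i : ℕ)) := rfl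
      have hzb : z b = x + ∑ i : Fin n, lift (b i) * π ^ (j + (i : ℕ)) := rfl
      have key : ∑ i : Fin n, d i * π ^ (j + (i : ℕ))
          = (∑ i : Fin n, lift (a i) * π ^ (j + (i : ℕ)))
            - ∑ i : Fin n, lift (b i) * π ^ (j + (i : ℕ)) := by
        rw [← Finset.sum_sub_distrib]
        exact Finset.sum_congr rfl fun i _ => by rw [hdi]; ring
      have hzzsum : z a - z b = ∑ i : Fin n, d i * π ^ (j + (i : ℕ)) := by
        rw [key, hza, hzb]; ring
      have hsplit : (∑ i : Fin n, d i * π ^ (j + (i : ℕ)))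
          = d i0 * π ^ (j + (i0 : ℕ))
            + ∑ i ∈ Finset.univ.erase i0, d i * π ^ (j + (i : ℕ)) :=
        (Finset.add_sum_erase _ _ (Finset.mem_univ i0)).symm
      have hw : (∑ i ∈ Finset.univ.erase i0, d i * π ^ (j + (i : ℕ)))
          ∈ p ^ (j + (i0 : ℕ) + 1) := by
        refine Ideal.sum_mem _ fun i hi => ?_
        have hine : i ≠ i0 := (Finset.mem_erase.mp hi).1
        rcases lt_or_gt_of_ne hine with hlt' | hgt
        · have : d i = 0 := by rw [hdi, hlt i hlt', sub_self]
          rw [this, zero_mul]; exact (p ^ _).zero_mem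
        · exact Ideal.mul_mem_left _ _ (aux_pow_mem hπ (by
            have : (i0 : ℕ) < (i : ℕ) := hgt
            omega))
      have hfinal : d i0 * π ^ (j + (i0 : ℕ)) ∈ p ^ (j + (i0 : ℕ) + 1) := by
        have hvle : j + (i0 : ℕ) + 1 ≤ v := by
          have := i0.isLt
          omega
        have h1 : z a - z b ∈ p ^ (j + (i0 : ℕ) + 1) :=
          Ideal.pow_le_pow_right hvle hzz
        rw [hzzsum, hsplit] at h1
        have : d i0 * π ^ (j + (i0 : ℕ))
            = (d i0 * π ^ (j + (i0 : ℕ))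
              + ∑ i ∈ Finset.univ.erase i0, d i * π ^ (j + (i : ℕ)))
              - ∑ i ∈ Finset.univ.erase i0, d i * π ^ (j + (i : ℕ)) := by ring
        rw [this]
        exact Ideal.sub_mem _ h1 hw
      exact aux_unit_mul hπ hdi0 _ hfinal
    calc q ^ n = Fintype.card (Fin n → ResidueField R) := by
          simp [hq, Fintype.card_fun]
      _ = (Finset.univ : Finset (Fin n → ResidueField R)).card := (Finset.card_univ).symm
      _ ≤ (S.filter (fun y => x - y ∈ p ^ j)).card :=
          Finset.card_le_card_of_injOn g (fun a _ => hmaps a) hinj.injOn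
  -- counting: Tbar part
  have countT : ∀ j ∈ Finset.Ico 1 v,
      (Tbar.filter (fun y => x - y ∈ p ^ j)).card ≤ 1 := by
    intro j hj
    rw [Finset.mem_Ico] at hj
    rw [Finset.card_le_one]
    intro s hs s' hs'
    rw [Finset.mem_filter] at hs hs'
    obtain ⟨hsT, hxs⟩ := hs
    obtain ⟨hsT', hxs'⟩ := hs'
    obtain ⟨hsS, t, htT, hts⟩ := (hTbar s).mp hsT
    obtain ⟨hsS', t', htT', hts'⟩ := (hTbar s').mp hsT'
    have hp1 : p ^ j ≤ p := Ideal.pow_le_self (by omega)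
    have hpv : p ^ v ≤ p := Ideal.pow_le_self (by omega)
    have hss' : s - s' ∈ p := by
      have : s - s' = (x - s') - (x - s) := by ring
      rw [this]; exact Ideal.sub_mem _ (hp1 hxs') (hp1 hxs)
    have htt' : t = t' := by
      by_contra hne
      apply hTF t htT t' htT' hne
      have : t - t' = (t - s) - (t' - s') + (s - s') := by ring
      rw [this]
      exact Ideal.add_mem _ (Ideal.sub_mem _ (hpv hts) (hpv hts')) hss'
    have hu := (hS t).choose_spec.2
    have h1 : s = (hS t).choose := hu s ⟨hsS, hts⟩
    have h2 : s' = (hS t).choose := hu s' ⟨hsS', by rw [htt']; exact hts'⟩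
    rw [h1, h2]
  have claim4 : ∀ j ∈ Finset.Ico 1 v,
      q ^ (v - j) - 1 ≤ (A.filter (fun y => x - y ∈ p ^ j)).card := by
    intro j hj
    have h1 := countS j hj
    have h2 := countT j hj
    have hAF : A.filter (fun y => x - y ∈ p ^ j)
        = (S.filter (fun y => x - y ∈ p ^ j)) \ (Tbar.filter (fun y => x - y ∈ p ^ j)) := by
      ext z
      simp only [hA, Finset.mem_filter, Finset.mem_sdiff]
      tauto
    rw [hAF]
    calc q ^ (v - j) - 1 ≤ (S.filter (fun y => x - y ∈ p ^ j)).card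
          - (Tbar.filter (fun y => x - y ∈ p ^ j)).card := by omega
      _ ≤ _ := Finset.le_card_sdiff _ _
  -- Claim 5: reindex
  have claim5 : (∑ i ∈ Finset.Ico 1 v, (q ^ i - 1))
      = ∑ j ∈ Finset.Ico 1 v, (q ^ (v - j) - 1) := by
    refine Finset.sum_nbij' (fun i => v - i) (fun j => v - j) ?_ ?_ ?_ ?_ ?_ <;>
        intro a ha <;> simp only [Finset.mem_Ico] at ha ⊢
    · omega
    · omega
    · omega
    · omega
    · rw [Nat.sub_sub_self (by omega : a ≤ v)]
  have final : (∑ i ∈ Finset.Ico 1 v, (q ^ i - 1)) ≤ ∑ y ∈ A, e y := by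
    rw [claim5, claim3]
    exact Finset.sum_le_sum claim4
  exact Ideal.pow_le_pow_right final claim2
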